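/- (Augmentation nulls the shifted symplectic self-product) Let u(D) ∈ (Z_2(D))^{2n} with shifted symplectic self-product (u⊙u)(D), and let (u⊙u)(D)^+ := Σ_{i>0} (u⊙u)_i D^i denote its strictly positive-degree part. Define the augmented vector u'(D) ∈ (Z_2(D))^{2(n+1)} by appending (u⊙u)(D)^+ to the Z-part and 1 to the X-part. Then (u'⊙u')(D) = 0. -/

import Mathlib

open Finset

/-- Laurent polynomials over `F₂`, i.e. `ℤ₂(D)`. -/
abbrev L2 := LaurentPolynomial (ZMod 2)

/-- Time reversal: substitution of `D⁻¹` for `D` in a Laurent polynomial. -/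
noncomputable def rev (f : L2) : L2 := LaurentPolynomial.invert f

/-- The shifted symplectic product of `u = [z|x]` and `v = [z'|x']` in `(ℤ₂(D))^{2n}`:
`(u ⊙ v)(D) = z(D) · x'(D⁻¹) + x(D) · z'(D⁻¹)`. -/
noncomputable def ssp (n : ℕ) (u v : (Fin n → L2) × (Fin n → L2)) : L2 :=
  ∑ i, (u.1 i * rev (v.2 i) + u.2 i * rev (v.1 i))

/-- The strictly positive-degree part `f(D)⁺ = Σ_{i>0} fᵢ Dⁱ` of a Laurent polynomial. -/
noncomputable def posPart (f : L2) : L2 := AddMonoidAlgebra.ofCoeff (Finsupp.filter (fun i : ℤ => 0 < i) f.coeff)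

lemma rev_apply (f : L2) (k : ℤ) : (rev f).coeff k = f.coeff (-k) := LaurentPolynomial.invert_apply f k

lemma rev_add (f g : L2) : rev (f + g) = rev f + rev g := map_add _ f g

lemma rev_mul (f g : L2) : rev (f * g) = rev f * rev g := map_mul _ f g

lemma rev_rev (f : L2) : rev (rev f) = f := LaurentPolynomial.involutive_invert f

lemma rev_one : rev (1 : L2) = 1 := map_one LaurentPolynomial.invert

lemma L2.add_self (f : L2) : f + f = 0 := by
  ext k
  rw [AddMonoidAlgebra.coeff_add, Finsupp.add_apply, CharTwo.add_self_eq_zero]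
  rfl

lemma rev_ssp_self (n : ℕ) (u : (Fin n → L2) × (Fin n → L2)) :
    rev (ssp n u u) = ssp n u u := by
  unfold ssp rev
  rw [map_sum]
  refine Finset.sum_congr rfl fun i _ => ?_
  rw [map_add, map_mul, map_mul]
  change rev (u.1 i) * rev (rev (u.2 i)) + rev (u.2 i) * rev (rev (u.1 i))
      = u.1 i * rev (u.2 i) + u.2 i * rev (u.1 i)
  rw [rev_rev, rev_rev]
  ring

lemma ssp_self_zero (n : ℕ) (u : (Fin n → L2) × (Fin n → L2)) :
    (ssp n u u).coeff 0 = 0 := by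
  unfold ssp
  rw [AddMonoidAlgebra.coeff_sum, Finsupp.finset_sum_apply]
  refine Finset.sum_eq_zero fun i _ => ?_
  rw [AddMonoidAlgebra.coeff_add, Finsupp.add_apply]
  have h : (u.2 i * rev (u.1 i)).coeff 0 = (u.1 i * rev (u.2 i)).coeff 0 := by
    have := rev_apply (rev (u.1 i * rev (u.2 i))) 0
    calc (u.2 i * rev (u.1 i)).coeff 0 = (rev (u.1 i) * u.2 i).coeff 0 := by rw [mul_comm]
    _ = (rev (rev (u.1 i) * u.2 i)).coeff 0 := by rw [rev_apply]; norm_num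
    _ = (rev (rev (u.1 i)) * rev (u.2 i)).coeff 0 := by rw [rev_mul]
    _ = (u.1 i * rev (u.2 i)).coeff 0 := by rw [rev_rev]
  rw [h, CharTwo.add_self_eq_zero]

lemma posPart_decomp (f : L2) (hrev : rev f = f) (h0 : f.coeff 0 = 0) :
    posPart f + rev (posPart f) = f := by
  ext k
  rw [AddMonoidAlgebra.coeff_add, Finsupp.add_apply, rev_apply]
  have hneg : ∀ m : ℤ, f.coeff (-m) = f.coeff m := fun m =>
    (rev_apply f m).symm.trans (by rw [hrev])
  change (Finsupp.filter (fun i : ℤ => 0 < i) f.coeff) k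
      + (Finsupp.filter (fun i : ℤ => 0 < i) f.coeff) (-k) = f.coeff k
  rw [Finsupp.filter_apply, Finsupp.filter_apply]
  rcases lt_trichotomy k 0 with hk | hk | hk
  · rw [if_neg (by omega), if_pos (by omega), zero_add, hneg]
  · subst hk; simp [h0]
  · rw [if_pos hk, if_neg (by omega), add_zero]

/-- Augmentation nulls the shifted symplectic self-product: for `u(D) ∈ (ℤ₂(D))^{2n}`,
the augmented vector `u'(D) ∈ (ℤ₂(D))^{2(n+1)}`, obtained by appending the strictly
positive part `(u ⊙ u)(D)⁺` to the `Z`-part of `u` and `1` to its `X`-part, satisfies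
`(u' ⊙ u')(D) = 0`. -/
theorem augmentation_nulls_ssp (n : ℕ) (u : (Fin n → L2) × (Fin n → L2)) :
    ssp (n + 1) (Fin.snoc u.1 (posPart (ssp n u u)), Fin.snoc u.2 1)
        (Fin.snoc u.1 (posPart (ssp n u u)), Fin.snoc u.2 1) = 0 := by
  set s := ssp n u u with hs
  have hsplit : ssp (n + 1) (Fin.snoc u.1 (posPart s), Fin.snoc u.2 1)
        (Fin.snoc u.1 (posPart s), Fin.snoc u.2 1)
      = s + (posPart s * rev 1 + 1 * rev (posPart s)) := by
    unfold ssp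
    rw [Fin.sum_univ_castSucc]
    simp only [Fin.snoc_castSucc, Fin.snoc_last]
    rfl
  rw [hsplit, rev_one, mul_one, one_mul,
    posPart_decomp s (rev_ssp_self n u) (ssp_self_zero n u),
    L2.add_self]
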